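/- arXiv:1809.03988 — 3 statements merged into one kernel-verified Lean document; each statement's English description precedes it below -/
import Mathlib

section
/- Let λ_1, ..., λ_N be distinct nonzero elements of F_q and let G be the N × (N-B) Vandermonde matrix with entries G_{i,j} = λ_i^{j-1}, for 0 ≤ B < N. Let Bmat be any N × B matrix whose columns are distinct standard basis vectors of F_q^N. Then the N × N matrix [G | Bmat] is invertible. -/
/-- Let `λ₁, …, λ_N` be distinct nonzero elements of `F_q` (with
`q > N`) and `G` the `N × (N-B)` Vandermonde matrix `G i j = λᵢ^j` (`0 ≤ B < N`).
Let `Bmat` be an `N × B` matrix whose columns are distinct standard basis vectors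
of `F_q^N`. Then the `N × N` matrix `[G | Bmat]` is invertible. -/
theorem stmt2 {F : Type*} [Field F] [Fintype F] [DecidableEq F]
    (N B : ℕ) (hB : B < N) (hq : N < Fintype.card F)
    (lam : Fin N → F) (hinj : Function.Injective lam) (hnz : ∀ i, lam i ≠ 0)
    (inj : Fin B → Fin N) (hBinj : Function.Injective inj) :
    IsUnit (Matrix.det (fun i j : Fin N =>
      Sum.elim (fun j' : Fin (N - B) => lam i ^ (j' : ℕ))
               (fun j' : Fin B => if i = inj j' then (1 : F) else 0)
        (finSumFinEquiv.symm (finCongr (Nat.sub_add_cancel hB.le).symm j)))) := by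
  classical
  set e : Fin N ≃ Fin (N - B) ⊕ Fin B :=
    (finCongr (Nat.sub_add_cancel hB.le).symm).trans finSumFinEquiv.symm with he
  rw [isUnit_iff_ne_zero]
  intro hdet
  obtain ⟨v, hv, hMv⟩ := Matrix.exists_mulVec_eq_zero_iff.mpr hdet
  set a : Fin (N - B) → F := fun j => v (e.symm (Sum.inl j)) with ha'
  set b : Fin B → F := fun j => v (e.symm (Sum.inr j)) with hb'
  have key : ∀ i : Fin N,
      (∑ j' : Fin (N - B), lam i ^ (j' : ℕ) * a j')
        + ∑ j' : Fin B, (if i = inj j' then (1:F) else 0) * b j' = 0 := by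
    intro i
    have h0 := congrFun hMv i
    simp only [Matrix.mulVec, dotProduct, Pi.zero_apply] at h0
    have hs := Equiv.sum_comp e
      (fun s : Fin (N - B) ⊕ Fin B =>
        Sum.elim (fun j' : Fin (N - B) => lam i ^ (j' : ℕ))
          (fun j' : Fin B => if i = inj j' then (1 : F) else 0) s * v (e.symm s))
    simp only [Equiv.symm_apply_apply] at hs
    have h0' : ∑ x : Fin N,
        Sum.elim (fun j' : Fin (N - B) => lam i ^ (j' : ℕ))
          (fun j' : Fin B => if i = inj j' then (1 : F) else 0) (e x) * v x = 0 := h0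
    rw [hs, Fintype.sum_sum_type] at h0'
    simpa using h0'
  set T : Finset (Fin N) := (Finset.image inj Finset.univ)ᶜ with hT
  have hcardT : Fintype.card T = N - B := by
    rw [Fintype.card_coe, hT, Finset.card_compl,
      Finset.card_image_of_injective _ hBinj, Finset.card_fin, Fintype.card_fin]
  have g : Fin (N - B) ≃ T := (Fintype.equivFinOfCardEq hcardT).symm
  have hW : (Matrix.vandermonde (fun k => lam ((g k : Fin N)))).det ≠ 0 := by
    rw [Matrix.det_vandermonde_ne_zero_iff]
    exact hinj.comp (Subtype.val_injective.comp g.injective)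
  have hWa : Matrix.mulVec (Matrix.vandermonde (fun k => lam (g k : Fin N))) a = 0 := by
    funext k
    have hi : ((g k : Fin N)) ∉ Finset.image inj Finset.univ := by
      exact Finset.mem_compl.mp (g k).2
    have h2 : ∀ j', (if (g k : Fin N) = inj j' then (1:F) else 0) * b j' = 0 := by
      intro j'
      have hne : (g k : Fin N) ≠ inj j' := by
        intro h
        exact hi (by simp [h])
      simp [hne]
    have h3 := key (g k : Fin N)
    rw [Finset.sum_congr rfl (fun j' _ => h2 j'), Finset.sum_const_zero, add_zero] at h3
    simpa [Matrix.mulVec, dotProduct, Matrix.vandermonde] using h3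
  have ha : a = 0 := by
    by_contra h
    exact hW (Matrix.exists_mulVec_eq_zero_iff.mp ⟨a, h, hWa⟩)
  have hb : b = 0 := by
    funext j0
    have h3 := key (inj j0)
    simp only [ha, Pi.zero_apply, mul_zero, Finset.sum_const_zero, zero_add,
      hBinj.eq_iff] at h3
    simpa using h3
  apply hv
  funext x
  have hx : x = e.symm (e x) := (e.symm_apply_apply x).symm
  rw [hx]
  rcases e x with j | j
  · have := congrFun ha j
    simpa [ha'] using this
  · have := congrFun hb j
    simpa [hb'] using this
end

section
/- Let A_1, ..., A_M, Q, W be finite random variables. Suppose for every T-subset S of [1:M] we have H(W) ≤ H(A_{[1:M]} | Q) - H(A_S | Q) + δ. Then H(W) ≤ ((M-T)/M)·H(A_{[1:M]} | Q) + δ. -/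
open Finset

/-- Probability that a finite random variable `X` (on a finite outcome space with
probability mass function `p`) takes the value `a`. -/
noncomputable def probOf {Ω : Type*} [Fintype Ω] {α : Type*} [Fintype α] [DecidableEq α]
    (p : Ω → ℝ) (X : Ω → α) (a : α) : ℝ :=
  ∑ ω ∈ univ.filter (fun ω => X ω = a), p ω

/-- Shannon entropy `H(X)` of a finite random variable. -/
noncomputable def entH {Ω : Type*} [Fintype Ω] {α : Type*} [Fintype α] [DecidableEq α]
    (p : Ω → ℝ) (X : Ω → α) : ℝ :=
  - ∑ a : α, probOf p X a * Real.log (probOf p X a)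

/-- Conditional Shannon entropy `H(X | Y) = H(X, Y) - H(Y)`. -/
noncomputable def condH {Ω : Type*} [Fintype Ω] {α β : Type*}
    [Fintype α] [DecidableEq α] [Fintype β] [DecidableEq β]
    (p : Ω → ℝ) (X : Ω → α) (Y : Ω → β) : ℝ :=
  entH p (fun ω => (X ω, Y ω)) - entH p Y

/-- Mutual information `I(X ; Y) = H(X) + H(Y) - H(X, Y)`. -/
noncomputable def mutI {Ω : Type*} [Fintype Ω] {α β : Type*}
    [Fintype α] [DecidableEq α] [Fintype β] [DecidableEq β]
    (p : Ω → ℝ) (X : Ω → α) (Y : Ω → β) : ℝ :=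
  entH p X + entH p Y - entH p (fun ω => (X ω, Y ω))

/-- Conditional mutual information `I(X ; Y | Z) = H(X|Z) + H(Y|Z) - H(X,Y|Z)`. -/
noncomputable def cmutI {Ω : Type*} [Fintype Ω] {α β γ : Type*}
    [Fintype α] [DecidableEq α] [Fintype β] [DecidableEq β] [Fintype γ] [DecidableEq γ]
    (p : Ω → ℝ) (X : Ω → α) (Y : Ω → β) (Z : Ω → γ) : ℝ :=
  condH p X Z + condH p Y Z - condH p (fun ω => (X ω, Y ω)) Z

/-- `p` is a probability mass function on the finite outcome space `Ω`. -/
def IsPMF {Ω : Type*} [Fintype Ω] (p : Ω → ℝ) : Prop :=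
  (∀ ω, 0 ≤ p ω) ∧ ∑ ω, p ω = 1

set_option linter.unusedSectionVars false

section Aux
variable {Ω : Type*} [Fintype Ω] {α β γ : Type*} [Fintype α] [DecidableEq α]
  [Fintype β] [DecidableEq β] [Fintype γ] [DecidableEq γ] {p : Ω → ℝ}

lemma probOf_nonneg (hp : IsPMF p) (X : Ω → α) (a : α) : 0 ≤ probOf p X a :=
  Finset.sum_nonneg fun ω _ => hp.1 ω

lemma sum_probOf (X : Ω → α) : ∑ a : α, probOf p X a = ∑ ω, p ω := by
  simpa [probOf] using Finset.sum_fiberwise (univ : Finset Ω) X p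

lemma probOf_congr {X : Ω → α} {Y : Ω → β} {a : α} {b : β}
    (h : ∀ ω, X ω = a ↔ Y ω = b) : probOf p X a = probOf p Y b := by
  unfold probOf
  congr 1
  ext ω
  simp [h ω]

lemma marginal_fst (X : Ω → α) (Y : Ω → β) (a : α) :
    ∑ b : β, probOf p (fun ω => (X ω, Y ω)) (a, b) = probOf p X a := by
  unfold probOf
  rw [← Finset.sum_fiberwise (univ.filter (fun ω => X ω = a)) Y p]
  refine Finset.sum_congr rfl fun b _ => Finset.sum_congr ?_ fun _ _ => rfl
  ext ω
  simp [Prod.ext_iff, and_comm]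

lemma marginal_snd (X : Ω → α) (Y : Ω → β) (b : β) :
    ∑ a : α, probOf p (fun ω => (X ω, Y ω)) (a, b) = probOf p Y b := by
  rw [← marginal_fst Y X b]
  exact Finset.sum_congr rfl fun a _ => probOf_congr fun ω => by simp [Prod.ext_iff, and_comm]

lemma probOf_pair_le_fst (hp : IsPMF p) (X : Ω → α) (Y : Ω → β) (a : α) (b : β) :
    probOf p (fun ω => (X ω, Y ω)) (a, b) ≤ probOf p X a := by
  rw [← marginal_fst X Y a]
  exact Finset.single_le_sum (f := fun b => probOf p (fun ω => (X ω, Y ω)) (a, b)) (fun c _ => probOf_nonneg hp _ _) (mem_univ b)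

lemma probOf_pair_le_snd (hp : IsPMF p) (X : Ω → α) (Y : Ω → β) (a : α) (b : β) :
    probOf p (fun ω => (X ω, Y ω)) (a, b) ≤ probOf p Y b := by
  rw [← marginal_snd X Y b]
  exact Finset.single_le_sum (f := fun a => probOf p (fun ω => (X ω, Y ω)) (a, b)) (fun c _ => probOf_nonneg hp _ _) (mem_univ a)


lemma entH_comp_inj {f : α → β} (hf : Function.Injective f) (X : Ω → α) :
    entH p (fun ω => f (X ω)) = entH p X := by
  unfold entH
  congr 1
  have himg := Finset.sum_image (s := (univ : Finset α)) (g := f)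
      (f := fun b => probOf p (fun ω => f (X ω)) b * Real.log (probOf p (fun ω => f (X ω)) b))
      (fun a _ b _ h => hf h)
  rw [← Finset.sum_subset (Finset.subset_univ (univ.image f)), himg]
  · refine Finset.sum_congr rfl fun a _ => ?_
    have : probOf p (fun ω => f (X ω)) (f a) = probOf p X a :=
      probOf_congr fun ω => ⟨fun h => hf h, fun h => by rw [h]⟩
    rw [this]
  · intro b _ hb
    have : probOf p (fun ω => f (X ω)) b = 0 := by
      unfold probOf
      rw [Finset.sum_eq_zero]
      intro ω hω
      simp only [mem_filter] at hω
      exact absurd (hω.2 ▸ Finset.mem_image_of_mem f (mem_univ (X ω))) hb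
    simp [this]

lemma entH_snd_le (hp : IsPMF p) (X : Ω → α) (Y : Ω → β) :
    entH p Y ≤ entH p (fun ω => (X ω, Y ω)) := by
  unfold entH
  rw [neg_le_neg_iff, Fintype.sum_prod_type]
  calc ∑ a : α, ∑ b : β, probOf p (fun ω => (X ω, Y ω)) (a, b) *
        Real.log (probOf p (fun ω => (X ω, Y ω)) (a, b))
      ≤ ∑ a : α, ∑ b : β, probOf p (fun ω => (X ω, Y ω)) (a, b) *
        Real.log (probOf p Y b) := by
        refine Finset.sum_le_sum fun a _ => Finset.sum_le_sum fun b _ => ?_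
        rcases eq_or_lt_of_le (probOf_nonneg hp (fun ω => (X ω, Y ω)) (a, b)) with h | h
        · simp [← h]
        · exact mul_le_mul_of_nonneg_left
            (Real.log_le_log h (probOf_pair_le_snd hp X Y a b)) h.le
    _ = ∑ b : β, probOf p Y b * Real.log (probOf p Y b) := by
        rw [Finset.sum_comm]
        refine Finset.sum_congr rfl fun b _ => ?_
        rw [← Finset.sum_mul, marginal_snd]

lemma entH_fst_le (hp : IsPMF p) (X : Ω → α) (Y : Ω → β) :
    entH p X ≤ entH p (fun ω => (X ω, Y ω)) := by
  have hswap : entH p (fun ω => (Y ω, X ω)) = entH p (fun ω => (X ω, Y ω)) := by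
    have := entH_comp_inj (p := p) (f := Prod.swap (α := α) (β := β))
      Prod.swap_injective (fun ω => (X ω, Y ω))
    simpa using this
  rw [← hswap]
  exact entH_snd_le hp Y X

lemma entH_comp_le (hp : IsPMF p) (f : α → β) (X : Ω → α) :
    entH p (fun ω => f (X ω)) ≤ entH p X := by
  have h1 : entH p (fun ω => (f (X ω), X ω)) = entH p X :=
    entH_comp_inj (f := fun a => (f a, a)) (fun a b h => (Prod.ext_iff.1 h).2) X
  rw [← h1]
  exact entH_fst_le hp _ _

/-- Two mutually-determined random variables have the same entropy. -/
lemma entH_congr (hp : IsPMF p) {X : Ω → α} {Y : Ω → β}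
    (f : α → β) (hf : ∀ ω, Y ω = f (X ω)) (g : β → α) (hg : ∀ ω, X ω = g (Y ω)) :
    entH p X = entH p Y := by
  have h1 : entH p Y ≤ entH p X := by
    have := entH_comp_le hp f X
    rwa [show (fun ω => f (X ω)) = Y from funext fun ω => (hf ω).symm] at this
  have h2 : entH p X ≤ entH p Y := by
    have := entH_comp_le hp g Y
    rwa [show (fun ω => g (Y ω)) = X from funext fun ω => (hg ω).symm] at this
  exact le_antisymm h2 h1

lemma log_ineq {a b : ℝ} (ha : 0 ≤ a) (hb : 0 < b) :
    a - b ≤ a * (Real.log a - Real.log b) := by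
  rcases eq_or_lt_of_le ha with h | h
  · simp [← h, hb.le]
  · have h1 : Real.log (b / a) ≤ b / a - 1 := Real.log_le_sub_one_of_pos (by positivity)
    have h2 : Real.log (b / a) = Real.log b - Real.log a := Real.log_div hb.ne' h.ne'
    rw [h2] at h1
    have := mul_le_mul_of_nonneg_left h1 h.le
    have hba : a * (b / a) = b := by field_simp
    nlinarith

theorem cmutI_nonneg (hp : IsPMF p) (X : Ω → α) (Y : Ω → β) (Z : Ω → γ) :
    0 ≤ cmutI p X Y Z := by
  classical
  set J : Ω → α × β × γ := fun ω => (X ω, Y ω, Z ω) with hJ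
  set r : α → β → γ → ℝ := fun a b c => probOf p J (a, b, c) with hr
  set pz : γ → ℝ := fun c => probOf p Z c with hpz
  set pxz : α → γ → ℝ := fun a c => probOf p (fun ω => (X ω, Z ω)) (a, c) with hpxz
  set pyz : β → γ → ℝ := fun b c => probOf p (fun ω => (Y ω, Z ω)) (b, c) with hpyz
  -- reshuffled views of r
  have rXZY : ∀ a b c, r a b c = probOf p (fun ω => ((X ω, Z ω), Y ω)) ((a, c), b) :=
    fun a b c => probOf_congr fun ω => by simp [Prod.ext_iff]; tauto
  have rYZX : ∀ a b c, r a b c = probOf p (fun ω => ((Y ω, Z ω), X ω)) ((b, c), a) :=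
    fun a b c => probOf_congr fun ω => by simp [Prod.ext_iff]; tauto
  -- marginals
  have mA : ∀ a c, ∑ b, r a b c = pxz a c := by
    intro a c
    rw [Finset.sum_congr rfl fun b _ => rXZY a b c]
    exact marginal_fst (fun ω => (X ω, Z ω)) Y (a, c)
  have mB : ∀ b c, ∑ a, r a b c = pyz b c := by
    intro b c
    rw [Finset.sum_congr rfl fun a _ => rYZX a b c]
    exact marginal_fst (fun ω => (Y ω, Z ω)) X (b, c)
  have mC : ∀ c, ∑ a, ∑ b, r a b c = pz c := by
    intro c
    rw [Finset.sum_comm]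
    rw [Finset.sum_congr rfl fun b _ => mB b c]
    exact marginal_snd Y Z c
  have mD : ∀ a c, pxz a c ≤ pz c := fun a c => probOf_pair_le_snd hp X Z a c
  have mE : ∀ b c, pyz b c ≤ pz c := fun b c => probOf_pair_le_snd hp Y Z b c
  have mF : ∀ a b c, r a b c ≤ pxz a c := by
    intro a b c; rw [rXZY a b c]; exact probOf_pair_le_fst hp _ _ _ _
  have mG : ∀ a b c, r a b c ≤ pyz b c := by
    intro a b c; rw [rYZX a b c]; exact probOf_pair_le_fst hp _ _ _ _
  have rpos : ∀ a b c, 0 ≤ r a b c := fun a b c => probOf_nonneg hp _ _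
  have pzpos : ∀ c, 0 ≤ pz c := fun c => probOf_nonneg hp _ _
  have swap3 : ∀ f : α → β → γ → ℝ,
      ∑ a, ∑ b, ∑ c, f a b c = ∑ c, ∑ a, ∑ b, f a b c := by
    intro f
    calc ∑ a, ∑ b, ∑ c, f a b c = ∑ a, ∑ c, ∑ b, f a b c :=
          Finset.sum_congr rfl fun a _ => Finset.sum_comm
      _ = ∑ c, ∑ a, ∑ b, f a b c := Finset.sum_comm
  -- entropy expansions
  have eZ : entH p Z = -∑ c, ∑ a, ∑ b, r a b c * Real.log (pz c) := by
    unfold entH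
    congr 1
    refine Finset.sum_congr rfl fun c _ => ?_
    have : ∑ a, ∑ b, r a b c * Real.log (pz c) = pz c * Real.log (pz c) := by
      simp_rw [← Finset.sum_mul]
      rw [mC]
    rw [← this]
  have eXZ : entH p (fun ω => (X ω, Z ω)) = -∑ c, ∑ a, ∑ b, r a b c * Real.log (pxz a c) := by
    unfold entH
    congr 1
    rw [Fintype.sum_prod_type, Finset.sum_comm]
    refine Finset.sum_congr rfl fun c _ => Finset.sum_congr rfl fun a _ => ?_
    rw [← Finset.sum_mul, mA]
  have eYZ : entH p (fun ω => (Y ω, Z ω)) = -∑ c, ∑ a, ∑ b, r a b c * Real.log (pyz b c) := by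
    unfold entH
    congr 1
    rw [Fintype.sum_prod_type, Finset.sum_comm]
    refine Finset.sum_congr rfl fun c _ => ?_
    rw [Finset.sum_comm]
    refine Finset.sum_congr rfl fun b _ => ?_
    rw [← Finset.sum_mul, mB]
  have eJ : entH p (fun ω => ((X ω, Y ω), Z ω)) = -∑ c, ∑ a, ∑ b, r a b c * Real.log (r a b c) := by
    have hinj : Function.Injective (fun t : α × β × γ => ((t.1, t.2.1), t.2.2)) := by
      intro t s h
      simp only [Prod.ext_iff] at h ⊢
      tauto
    have hcomp := entH_comp_inj (p := p) hinj J
    rw [show (fun ω => ((X ω, Y ω), Z ω)) =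
      (fun ω => (fun t : α × β × γ => ((t.1, t.2.1), t.2.2)) (J ω)) from rfl, hcomp]
    unfold entH
    congr 1
    rw [Fintype.sum_prod_type]
    simp_rw [Fintype.sum_prod_type]
    exact swap3 _
  set g : α → β → γ → ℝ := fun a b c => pxz a c * pyz b c / pz c with hg
  have key : ∀ a b c, r a b c - g a b c ≤
      r a b c * Real.log (r a b c) + r a b c * Real.log (pz c)
      - r a b c * Real.log (pxz a c) - r a b c * Real.log (pyz b c) := by
    intro a b c
    rcases eq_or_lt_of_le (rpos a b c) with h | h
    · have hg0 : 0 ≤ g a b c :=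
        div_nonneg (mul_nonneg (probOf_nonneg hp _ _) (probOf_nonneg hp _ _)) (pzpos c)
      rw [← h]
      simp
      linarith
    · have hx : 0 < pxz a c := lt_of_lt_of_le h (mF a b c)
      have hy : 0 < pyz b c := lt_of_lt_of_le h (mG a b c)
      have hz : 0 < pz c := lt_of_lt_of_le hx (mD a c)
      have hgpos : 0 < g a b c := div_pos (mul_pos hx hy) hz
      have hlog : Real.log (g a b c)
          = Real.log (pxz a c) + Real.log (pyz b c) - Real.log (pz c) := by
        rw [hg]
        simp only []
        rw [Real.log_div (mul_pos hx hy).ne' hz.ne', Real.log_mul hx.ne' hy.ne']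
      have hkey := log_ineq (rpos a b c) hgpos
      rw [hlog] at hkey
      have expand : r a b c * (Real.log (r a b c) -
          (Real.log (pxz a c) + Real.log (pyz b c) - Real.log (pz c)))
          = r a b c * Real.log (r a b c) + r a b c * Real.log (pz c)
            - r a b c * Real.log (pxz a c) - r a b c * Real.log (pyz b c) := by ring
      linarith
  have sum_r : ∑ c, ∑ a, ∑ b, r a b c = 1 := by
    have h1 := sum_probOf (p := p) J
    rw [hp.2] at h1
    rw [← swap3 (fun a b c => r a b c)]
    rw [← h1, Fintype.sum_prod_type]
    exact Finset.sum_congr rfl fun a _ => by rw [Fintype.sum_prod_type]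
  have sum_g : ∑ c, ∑ a, ∑ b, g a b c = 1 := by
    have hc : ∀ c, ∑ a, ∑ b, g a b c = pz c := by
      intro c
      have h2 : ∑ a, ∑ b, g a b c = (∑ a, pxz a c) * (∑ b, pyz b c) / pz c := by
        rw [Finset.sum_mul, Finset.sum_div]
        refine Finset.sum_congr rfl fun a _ => ?_
        rw [Finset.mul_sum, Finset.sum_div]
      have h3 : ∑ a, pxz a c = pz c := marginal_snd X Z c
      have h4 : ∑ b, pyz b c = pz c := marginal_snd Y Z c
      rw [h2, h3, h4]
      rcases eq_or_ne (pz c) 0 with h0 | h0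
      · simp [h0]
      · field_simp
    rw [Finset.sum_congr rfl fun c _ => hc c]
    have h5 := sum_probOf (p := p) Z
    rw [hp.2] at h5
    exact h5
  have hsum : cmutI p X Y Z = ∑ c, ∑ a, ∑ b,
      (r a b c * Real.log (r a b c) + r a b c * Real.log (pz c)
      - r a b c * Real.log (pxz a c) - r a b c * Real.log (pyz b c)) := by
    unfold cmutI condH
    rw [eZ, eXZ, eYZ, eJ]
    simp only [Finset.sum_add_distrib, Finset.sum_sub_distrib]
    ring
  rw [hsum]
  have hle : ∑ c, ∑ a, ∑ b, (r a b c - g a b c) ≤ ∑ c, ∑ a, ∑ b,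
      (r a b c * Real.log (r a b c) + r a b c * Real.log (pz c)
      - r a b c * Real.log (pxz a c) - r a b c * Real.log (pyz b c)) :=
    Finset.sum_le_sum fun c _ => Finset.sum_le_sum fun a _ =>
      Finset.sum_le_sum fun b _ => key a b c
  have hzero : ∑ c, ∑ a, ∑ b, (r a b c - g a b c) = 0 := by
    simp only [Finset.sum_sub_distrib, sum_r, sum_g]
    linarith [sum_r, sum_g]
  linarith

lemma entH_submodular (hp : IsPMF p) (X : Ω → α) (Y : Ω → β) (Z : Ω → γ) :
    entH p (fun ω => ((X ω, Y ω), Z ω)) + entH p Z ≤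
      entH p (fun ω => (X ω, Z ω)) + entH p (fun ω => (Y ω, Z ω)) := by
  have := cmutI_nonneg hp X Y Z
  unfold cmutI condH at this
  linarith

/-- The masked-tuple random variable representing `(A_S, Q)`. -/
def mask {M : ℕ} (A : Fin M → Ω → α) (Q : Ω → β) (S : Finset (Fin M)) :
    Ω → (Fin M → Option α) × β :=
  fun ω => (fun i => if i ∈ S then some (A i ω) else none, Q ω)

section Mask
variable {M : ℕ} (A : Fin M → Ω → α) (Q : Ω → β)

lemma mask_proj {U V : Finset (Fin M)} (hUV : U ⊆ V) (ω : Ω) :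
    mask A Q U ω = (fun t : (Fin M → Option α) × β =>
      ((fun j => if j ∈ U then t.1 j else none), t.2)) (mask A Q V ω) := by
  unfold mask
  refine Prod.ext ?_ rfl
  funext j
  by_cases hj : j ∈ U
  · simp [hj, hUV hj]
  · simp [hj]

lemma entH_mask_mono (hp : IsPMF p) {U V : Finset (Fin M)} (hUV : U ⊆ V) :
    entH p (mask A Q U) ≤ entH p (mask A Q V) := by
  have h := entH_comp_le hp (fun t : (Fin M → Option α) × β =>
      ((fun j => if j ∈ U then t.1 j else none), t.2)) (mask A Q V)
  rwa [show (fun ω => (fun t : (Fin M → Option α) × β =>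
      ((fun j => if j ∈ U then t.1 j else none), t.2)) (mask A Q V ω)) = mask A Q U
    from (funext fun ω => (mask_proj A Q hUV ω).symm)] at h

lemma entH_mask_empty (hp : IsPMF p) : entH p (mask A Q (∅ : Finset (Fin M))) = entH p Q := by
  refine entH_congr hp Prod.snd (fun ω => rfl)
    (fun q => ((fun _ => none), q)) (fun ω => ?_)
  unfold mask
  simp

lemma entH_mask_insert_pair (hp : IsPMF p) [Nonempty α] (i : Fin M) (U : Finset (Fin M)) :
    entH p (fun ω => (A i ω, mask A Q U ω)) = entH p (mask A Q (insert i U)) := by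
  classical
  have d : α := Classical.arbitrary α
  refine entH_congr hp
    (fun s : α × ((Fin M → Option α) × β) =>
      ((fun j => if j = i then some s.1 else s.2.1 j), s.2.2))
    (fun ω => ?_)
    (fun t : (Fin M → Option α) × β =>
      ((t.1 i).getD d, ((fun j => if j ∈ U then t.1 j else none), t.2)))
    (fun ω => ?_)
  · unfold mask
    refine Prod.ext ?_ rfl
    funext j
    by_cases hj : j = i
    · subst hj; simp
    · simp only [hj, if_false, Finset.mem_insert]
      by_cases hj2 : j ∈ U <;> simp [hj, hj2]
  · unfold mask
    refine Prod.ext ?_ (Prod.ext ?_ rfl)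
    · simp
    · funext j
      by_cases hj : j ∈ U
      · simp [hj, Finset.mem_insert_of_mem hj]
      · simp [hj]

lemma entH_mask_pair_subset (hp : IsPMF p) {U V : Finset (Fin M)} (hUV : U ⊆ V) :
    entH p (fun ω => (mask A Q V ω, mask A Q U ω)) = entH p (mask A Q V) := by
  refine entH_congr hp Prod.fst (fun ω => rfl)
    (fun t : (Fin M → Option α) × β =>
      (t, ((fun j => if j ∈ U then t.1 j else none), t.2)))
    (fun ω => ?_)
  refine Prod.ext rfl ?_
  exact mask_proj A Q hUV ω

lemma entH_mask_triple (hp : IsPMF p) [Nonempty α] (i : Fin M) {U V : Finset (Fin M)}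
    (hUV : U ⊆ V) :
    entH p (fun ω => ((A i ω, mask A Q V ω), mask A Q U ω)) =
      entH p (mask A Q (insert i V)) := by
  have h1 : entH p (fun ω => ((A i ω, mask A Q V ω), mask A Q U ω)) =
      entH p (fun ω => (A i ω, mask A Q V ω)) := by
    refine entH_congr hp Prod.fst (fun ω => rfl)
      (fun s : α × ((Fin M → Option α) × β) =>
        (s, ((fun j => if j ∈ U then s.2.1 j else none), s.2.2)))
      (fun ω => ?_)
    refine Prod.ext rfl ?_
    exact mask_proj A Q hUV ω
  rw [h1, entH_mask_insert_pair A Q hp i V]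

lemma entH_mask_submod (hp : IsPMF p) [Nonempty α] (i : Fin M) {U V : Finset (Fin M)}
    (hUV : U ⊆ V) :
    entH p (mask A Q (insert i V)) + entH p (mask A Q U) ≤
      entH p (mask A Q (insert i U)) + entH p (mask A Q V) := by
  have h := entH_submodular hp (A i) (mask A Q V) (mask A Q U)
  rwa [entH_mask_triple A Q hp i hUV, entH_mask_insert_pair A Q hp i U,
    entH_mask_pair_subset A Q hp hUV] at h

end Mask

section Cond
variable {M : ℕ} (A : Fin M → Ω → α) (Q : Ω → β)

lemma condH_subtype_eq (hp : IsPMF p) [Nonempty α] (S : Finset (Fin M)) :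
    condH p (fun ω => fun i : {i // i ∈ S} => A i.1 ω) Q =
      entH p (mask A Q S) - entH p Q := by
  classical
  unfold condH
  congr 1
  refine entH_congr hp
    (fun t : ({i // i ∈ S} → α) × β =>
      ((fun j => if h : j ∈ S then some (t.1 ⟨j, h⟩) else none), t.2))
    (fun ω => ?_)
    (fun t : (Fin M → Option α) × β =>
      ((fun i : {i // i ∈ S} => (t.1 i.1).getD (Classical.arbitrary α)), t.2))
    (fun ω => ?_)
  · unfold mask
    refine Prod.ext ?_ rfl
    funext j
    by_cases hj : j ∈ S <;> simp [hj]
  · unfold mask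
    refine Prod.ext ?_ rfl
    funext i
    simp [i.2]

lemma condH_full_eq (hp : IsPMF p) [Nonempty α] :
    condH p (fun ω => fun i => A i ω) Q =
      entH p (mask A Q (univ : Finset (Fin M))) - entH p Q := by
  unfold condH
  congr 1
  refine entH_congr hp
    (fun t : (Fin M → α) × β => ((fun j => some (t.1 j)), t.2))
    (fun ω => ?_)
    (fun t : (Fin M → Option α) × β =>
      ((fun j => (t.1 j).getD (Classical.arbitrary α)), t.2))
    (fun ω => ?_)
  · unfold mask; simp
  · unfold mask; simp

end Cond

section Chain
variable {M : ℕ} (A : Fin M → Ω → α) (Q : Ω → β)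

lemma chain_eq (hp : IsPMF p) (S : Finset (Fin M)) :
    entH p (mask A Q S) - entH p (mask A Q ∅) =
      ∑ i ∈ S, (entH p (mask A Q (S ∩ Iic i)) - entH p (mask A Q (S ∩ Iio i))) := by
  classical
  set E : Finset (Fin M) → ℝ := fun U => entH p (mask A Q U) with hE
  have huniv : ∑ i : Fin M, (E (S ∩ Iic i) - E (S ∩ Iio i)) = E S - E ∅ := by
    have hIic : ∀ i : Fin M, S ∩ Iic i = S.filter (fun j => j.val < i.val + 1) := by
      intro i; ext j
      simp only [Finset.mem_inter, Finset.mem_Iic, Finset.mem_filter, Fin.le_def]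
      exact ⟨fun ⟨h1, h2⟩ => ⟨h1, by omega⟩, fun ⟨h1, h2⟩ => ⟨h1, by omega⟩⟩
    have hIio : ∀ i : Fin M, S ∩ Iio i = S.filter (fun j => j.val < i.val) := by
      intro i; ext j
      simp only [Finset.mem_inter, Finset.mem_Iio, Finset.mem_filter, Fin.lt_def]
    have := Fin.sum_univ_eq_sum_range
      (fun k => E (S.filter (fun j => j.val < k + 1)) - E (S.filter (fun j => j.val < k))) M
    calc ∑ i : Fin M, (E (S ∩ Iic i) - E (S ∩ Iio i))
        = ∑ i : Fin M, (E (S.filter (fun j => j.val < i.val + 1)) -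
            E (S.filter (fun j => j.val < i.val))) := by
          refine Finset.sum_congr rfl fun i _ => ?_
          rw [hIic i, hIio i]
      _ = ∑ k ∈ Finset.range M, (E (S.filter (fun j => j.val < k + 1)) -
            E (S.filter (fun j => j.val < k))) := this
      _ = E (S.filter (fun j => j.val < M)) - E (S.filter (fun j => j.val < 0)) :=
          Finset.sum_range_sub (fun k => E (S.filter (fun j => j.val < k))) M
      _ = E S - E ∅ := by
          congr 1
          · congr 1
            refine Finset.filter_true_of_mem fun j _ => j.2
          · congr 1
            exact Finset.filter_false_of_mem fun j _ => by omega
  rw [← huniv]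
  refine (Finset.sum_subset (Finset.subset_univ S) fun i _ hi => ?_).symm
  have : S ∩ Iic i = S ∩ Iio i := by
    ext j
    simp only [Finset.mem_inter, Finset.mem_Iic, Finset.mem_Iio]
    constructor
    · rintro ⟨hjS, hj⟩
      refine ⟨hjS, lt_of_le_of_ne hj ?_⟩
      rintro rfl; exact hi hjS
    · rintro ⟨hjS, hj⟩; exact ⟨hjS, hj.le⟩
  rw [this, sub_self]

lemma step_bound (hp : IsPMF p) [Nonempty α] {S : Finset (Fin M)} {i : Fin M} (hi : i ∈ S) :
    entH p (mask A Q (Iic i)) - entH p (mask A Q (Iio i)) ≤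
      entH p (mask A Q (S ∩ Iic i)) - entH p (mask A Q (S ∩ Iio i)) := by
  have hins1 : insert i (S ∩ Iio i) = S ∩ Iic i := by
    ext j
    simp only [Finset.mem_insert, Finset.mem_inter, Finset.mem_Iio, Finset.mem_Iic]
    constructor
    · rintro (rfl | ⟨h1, h2⟩)
      · exact ⟨hi, le_refl _⟩
      · exact ⟨h1, h2.le⟩
    · rintro ⟨h1, h2⟩
      rcases eq_or_lt_of_le h2 with rfl | h3
      · exact Or.inl rfl
      · exact Or.inr ⟨h1, h3⟩
  have hins2 : insert i (Iio i) = Iic i := by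
    ext j
    simp only [Finset.mem_insert, Finset.mem_Iio, Finset.mem_Iic]
    simp only [Fin.le_def, Fin.lt_def, Fin.ext_iff]
    omega
  have h := entH_mask_submod A Q hp i (Finset.inter_subset_right (s₁ := S) (s₂ := Iio i))
  rw [hins1, hins2] at h
  linarith

end Chain

lemma count_mem_powersetCard {M T : ℕ} (hT : 1 ≤ T) (i : Fin M) :
    (((univ : Finset (Fin M)).powersetCard T).filter (fun S => i ∈ S)).card
      = (M - 1).choose (T - 1) := by
  classical
  have hcard : ((univ.erase i).powersetCard (T - 1)).card = (M - 1).choose (T - 1) := by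
    rw [Finset.card_powersetCard, Finset.card_erase_of_mem (mem_univ i), Finset.card_univ,
      Fintype.card_fin]
  rw [← hcard]
  refine Finset.card_nbij' (fun S => S.erase i) (fun t => insert i t) ?_ ?_ ?_ ?_
  · intro S hS
    simp only [Finset.mem_coe, Finset.mem_filter, Finset.mem_powersetCard_univ] at hS
    simp only [Finset.mem_coe, Finset.mem_powersetCard]
    constructor
    · intro j hj
      simp only [Finset.mem_erase] at hj ⊢
      exact ⟨hj.1, mem_univ j⟩
    · rw [Finset.card_erase_of_mem hS.2, hS.1]
  · intro t ht
    rw [Finset.mem_coe, Finset.mem_powersetCard] at ht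
    have hit : i ∉ t := fun hmem => by simpa using ht.1 hmem
    simp only [Finset.mem_coe, Finset.mem_filter, Finset.mem_powersetCard_univ]
    refine ⟨?_, Finset.mem_insert_self i t⟩
    rw [Finset.card_insert_of_notMem hit, ht.2]
    omega
  · intro S hS
    simp only [Finset.mem_coe, Finset.mem_filter] at hS
    exact Finset.insert_erase hS.2
  · intro t ht
    rw [Finset.mem_coe, Finset.mem_powersetCard] at ht
    exact Finset.erase_insert fun hmem => by simpa using ht.1 hmem

end Aux

/-- If for every `T`-subset `S` of `[1:M]` we have
`H(W) ≤ H(A_{[1:M]} | Q) - H(A_S | Q) + δ`, then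
`H(W) ≤ ((M-T)/M) · H(A_{[1:M]} | Q) + δ` (by averaging and Han's inequality). -/
theorem stmt9 {Ω : Type*} [Fintype Ω]
    {α β γ : Type*} [Fintype α] [DecidableEq α] [Fintype β] [DecidableEq β]
    [Fintype γ] [DecidableEq γ]
    (p : Ω → ℝ) (hp : IsPMF p)
    (M : ℕ) (A : Fin M → Ω → α) (Q : Ω → β) (W : Ω → γ)
    (T : ℕ) (hT : 1 ≤ T) (hTM : T ≤ M)
    (δ : ℝ) (hδ : 0 ≤ δ)
    (h : ∀ S ∈ (Finset.univ : Finset (Fin M)).powersetCard T,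
      entH p W ≤ condH p (fun ω => fun i => A i ω) Q -
        condH p (fun ω => fun i : {i // i ∈ S} => A i.1 ω) Q + δ) :
    entH p W ≤ (((M : ℝ) - T) / (M : ℝ)) * condH p (fun ω => fun i => A i ω) Q + δ := by
  classical
  have hM1 : 1 ≤ M := le_trans hT hTM
  rcases isEmpty_or_nonempty Ω with hΩ | hΩ
  · exfalso
    have := hp.2
    rw [Finset.univ_eq_empty] at this
    simp at this
  haveI : Nonempty α := ⟨A ⟨0, by omega⟩ (Classical.arbitrary Ω)⟩
  set E : Finset (Fin M) → ℝ := fun U => entH p (mask A Q U) with hE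
  set hfun : Fin M → ℝ := fun i => E (Iic i) - E (Iio i) with hhfun
  have hMR : (0:ℝ) < M := by
    have : (0:ℕ) < M := by omega
    exact_mod_cast this
  have htot : ∑ i : Fin M, hfun i = E univ - E ∅ := by
    rw [chain_eq A Q hp (univ : Finset (Fin M))]
    refine Finset.sum_congr rfl fun i _ => ?_
    rw [Finset.univ_inter, Finset.univ_inter]
  have hSbound : ∀ S : Finset (Fin M), ∑ i ∈ S, hfun i ≤ E S - E ∅ := by
    intro S
    rw [chain_eq A Q hp S]
    exact Finset.sum_le_sum fun i hi => step_bound A Q hp hi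
  set P := (univ : Finset (Fin M)).powersetCard T with hP
  have hPne : P.Nonempty := by
    obtain ⟨t, hts, htc⟩ := Finset.exists_subset_card_eq (s := (univ : Finset (Fin M))) (n := T)
      (by simpa [Finset.card_univ] using hTM)
    exact ⟨t, Finset.mem_powersetCard_univ.2 htc⟩
  have hswap : ∑ S ∈ P, ∑ i ∈ S, hfun i
      = (((M-1).choose (T-1) : ℕ) : ℝ) * ∑ i : Fin M, hfun i := by
    calc ∑ S ∈ P, ∑ i ∈ S, hfun i
        = ∑ S ∈ P, ∑ i : Fin M, if i ∈ S then hfun i else 0 := by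
          refine Finset.sum_congr rfl fun S _ => ?_
          rw [Finset.sum_ite_mem, Finset.univ_inter]
      _ = ∑ i : Fin M, ∑ S ∈ P, if i ∈ S then hfun i else 0 := Finset.sum_comm
      _ = ∑ i : Fin M, (((M-1).choose (T-1) : ℕ) : ℝ) * hfun i := by
          refine Finset.sum_congr rfl fun i _ => ?_
          rw [← Finset.sum_filter, Finset.sum_const, count_mem_powersetCard hT i,
            nsmul_eq_mul]
      _ = (((M-1).choose (T-1) : ℕ) : ℝ) * ∑ i : Fin M, hfun i := by
          rw [Finset.mul_sum]
  have hcard_P : P.card = M.choose T := by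
    rw [hP, Finset.card_powersetCard, Finset.card_univ, Fintype.card_fin]
  have hchoose : (M:ℝ) * (((M-1).choose (T-1) : ℕ) : ℝ) = ((M.choose T : ℕ) : ℝ) * T := by
    have hc := Nat.add_one_mul_choose_eq (M-1) (T-1)
    have h1 : M - 1 + 1 = M := by omega
    have h2 : T - 1 + 1 = T := by omega
    simp only [Nat.succ_eq_add_one, h1, h2] at hc
    exact_mod_cast hc
  have havg : ∃ S ∈ P, (T:ℝ)/M * (E univ - E ∅) ≤ ∑ i ∈ S, hfun i := by
    apply Finset.exists_le_of_sum_le hPne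
    rw [Finset.sum_const, hswap, htot, nsmul_eq_mul, hcard_P]
    have hcc : ((M.choose T : ℕ) : ℝ) * ((T:ℝ)/M) = (((M-1).choose (T-1) : ℕ) : ℝ) := by
      field_simp
      linarith [hchoose]
    refine le_of_eq ?_
    calc ((M.choose T : ℕ) : ℝ) * ((T:ℝ)/M * (E univ - E ∅))
        = (((M.choose T : ℕ) : ℝ) * ((T:ℝ)/M)) * (E univ - E ∅) := by ring
      _ = (((M-1).choose (T-1) : ℕ) : ℝ) * (E univ - E ∅) := by rw [hcc]
  obtain ⟨S, hSP, hSavg⟩ := havg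
  have hhyp := h S hSP
  rw [condH_full_eq A Q hp, condH_subtype_eq A Q hp S] at hhyp
  have hEempty : E ∅ = entH p Q := entH_mask_empty A Q hp
  have hS2 : (T:ℝ)/M * (E univ - E ∅) ≤ E S - E ∅ := le_trans hSavg (hSbound S)
  rw [condH_full_eq A Q hp]
  have hfrac : ((M:ℝ)-T)/M = 1 - (T:ℝ)/M := by field_simp
  rw [hfrac]
  rw [hEempty] at hS2
  nlinarith [hS2, hhyp]
end

section
/- Let W be uniform on F_q^L, Q a random variable independent of W, and A_1, ..., A_N finite random variables with equal entropies H(A_n | Q) = h for all n. If H(W) ≤ ((N-B-T)/(N-B))·H(A_{[1:N]\setminus\mathcal{B}} | Q) + o(L) for some B-subset 𝓑, then R = L / (Σ_n H(A_n)) satisfies limsup_{L→∞} R ≤ 1 - (B+T)/N. -/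
open Filter

/-- `W` is uniform on `F_q^L` (so `H(W) = L` in `q`-ary units), the
answers have equal entropies `H(A_n | Q) = h`, `H(A_{[1:N]∖𝓑} | Q) ≤ (N-B)·h` by
subadditivity, and `H(A_n) ≥ H(A_n | Q) = h`. If
`H(W) ≤ ((N-B-T)/(N-B)) · H(A_{[1:N]∖𝓑} | Q) + o(L)`, then the rate
`R = L / (Σₙ H(Aₙ)) = L / (N·H(Aₙ))` satisfies `limsup_{L→∞} R ≤ 1 - (B+T)/N`.
The entropies of the sequence of schemes indexed by `L` are modeled by real
sequences: `wH L = H(W)`, `h L = H(A_n|Q)`, `aH L = H(A_n)`, `hAS L = H(A_{[1:N]∖𝓑}|Q)`. -/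
theorem stmt12 (N B T : ℕ) (hN : B + T < N)
    (wH h aH hAS err : ℕ → ℝ)
    (hw : ∀ L, wH L = L)
    (hpos : ∀ L, 0 < h L)
    (hsub : ∀ L, hAS L ≤ ((N : ℝ) - B) * h L)
    (hge : ∀ L, h L ≤ aH L)
    (main : ∀ L, wH L ≤ (((N : ℝ) - B - T) / ((N : ℝ) - B)) * hAS L + err L)
    (herr : Tendsto (fun L : ℕ => err L / L) atTop (nhds 0)) :
    Filter.limsup (fun L : ℕ => (L : ℝ) / ((N : ℝ) * aH L)) atTop
      ≤ 1 - ((B : ℝ) + T) / N := by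
  have hBN : (B : ℝ) + T < N := by exact_mod_cast hN
  have hk : (0:ℝ) < (N : ℝ) - B - T := by linarith
  have hNB : (0:ℝ) < (N : ℝ) - B := by
    have : (T : ℝ) ≥ 0 := Nat.cast_nonneg T
    linarith
  have hNpos : (0:ℝ) < N := by exact_mod_cast Nat.zero_lt_of_lt hN
  set c : ℝ := ((N : ℝ) - B - T) / N with hc
  have key : ∀ L : ℕ, (L : ℝ) ≤ ((N:ℝ) - B - T) * h L + err L := by
    intro L
    have h1 := main L
    rw [hw] at h1
    have h2 : (((N : ℝ) - B - T) / ((N : ℝ) - B)) * hAS L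
        ≤ (((N : ℝ) - B - T) / ((N : ℝ) - B)) * (((N : ℝ) - B) * h L) := by
      apply mul_le_mul_of_nonneg_left (hsub L)
      positivity
    have h3 : (((N : ℝ) - B - T) / ((N : ℝ) - B)) * (((N : ℝ) - B) * h L)
        = ((N:ℝ) - B - T) * h L := by
      field_simp
    linarith
  -- the comparison sequence
  have hg : Tendsto (fun L : ℕ => c / (1 - err L / L)) atTop (nhds c) := by
    have h1 : Tendsto (fun L : ℕ => 1 - err L / L) atTop (nhds 1) := by
      have := herr.const_sub 1
      simpa using this
    have := (tendsto_const_nhds (x := c) (f := atTop)).div h1 one_ne_zero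
    simpa only [div_one, Pi.div_def] using this
  have hev : ∀ᶠ L : ℕ in atTop, (L : ℝ) / ((N : ℝ) * aH L) ≤ c / (1 - err L / L) := by
    have h1 : ∀ᶠ L in atTop, err L / (L:ℝ) < 1/2 :=
      herr.eventually (eventually_lt_nhds (by norm_num))
    filter_upwards [h1, eventually_ge_atTop 1] with L hL1 hL2
    have hLpos : (0:ℝ) < L := by exact_mod_cast hL2
    have herrL : err L < L := by
      have := (div_lt_iff₀ hLpos).mp hL1
      nlinarith
    have hdiff : (0:ℝ) < (L : ℝ) - err L := by linarith
    have hhL : ((L:ℝ) - err L) / ((N:ℝ) - B - T) ≤ h L := by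
      rw [div_le_iff₀ hk]
      have := key L
      linarith [mul_comm (h L) ((N:ℝ) - B - T)]
    have haHpos : 0 < aH L := lt_of_lt_of_le (hpos L) (hge L)
    have hden : (N:ℝ) * (((L:ℝ) - err L) / ((N:ℝ) - B - T)) ≤ (N:ℝ) * aH L := by
      apply mul_le_mul_of_nonneg_left _ hNpos.le
      exact le_trans hhL (hge L)
    have hdenpos : (0:ℝ) < (N:ℝ) * (((L:ℝ) - err L) / ((N:ℝ) - B - T)) := by
      positivity
    have h4 : (L : ℝ) / ((N : ℝ) * aH L)
        ≤ (L:ℝ) / ((N:ℝ) * (((L:ℝ) - err L) / ((N:ℝ) - B - T))) :=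
      div_le_div_of_nonneg_left hLpos.le hdenpos hden
    have h5 : (L:ℝ) / ((N:ℝ) * (((L:ℝ) - err L) / ((N:ℝ) - B - T)))
        = c / (1 - err L / L) := by
      rw [hc]
      rw [eq_div_iff (by
        have : err L / L < 1 := by
          rw [div_lt_one hLpos]; linarith
        linarith)]
      field_simp
    linarith [h4, h5.symm.le]
  have hbdd : IsBoundedUnder (· ≤ ·) atTop (fun L : ℕ => c / (1 - err L / L)) :=
    hg.isBoundedUnder_le
  have hcob : IsCoboundedUnder (· ≤ ·) atTop (fun L : ℕ => (L : ℝ) / ((N : ℝ) * aH L)) := by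
    apply isCoboundedUnder_le_of_le (x := 0) atTop
    intro L
    have haHpos : 0 < aH L := lt_of_lt_of_le (hpos L) (hge L)
    positivity
  calc Filter.limsup (fun L : ℕ => (L : ℝ) / ((N : ℝ) * aH L)) atTop
      ≤ Filter.limsup (fun L : ℕ => c / (1 - err L / L)) atTop :=
        limsup_le_limsup hev hcob hbdd
    _ = c := hg.limsup_eq
    _ = 1 - ((B : ℝ) + T) / N := by rw [hc]; field_simp; ring
end
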